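/- Let ρ : ℝ³ → [0,∞) be measurable, vanishing outside the cylinder D, with ρ ≤ M everywhere, and suppose ∫_{i ≤ x₁ ≤ i+1} ρ(x) dx ≤ C₁ |i|^{−α} for every nonzero integer i, where 0 < α ≤ 1. Then there is a constant C, depending only on A, M, C₁ and α, such that sup_{x∈ℝ³} ∫ ρ(y)/|x−y| dy ≤ C. -/

import Mathlib

noncomputable section
open MeasureTheory Real Set
open scoped ENNReal

/-- Three-dimensional Euclidean space. -/
abbrev E3 : Type := EuclideanSpace ℝ (Fin 3)

/-- The cross product on `ℝ³`. -/
def cross3 (a b : E3) : E3 :=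
  WithLp.toLp 2 ![a 1 * b 2 - a 2 * b 1, a 2 * b 0 - a 0 * b 2, a 0 * b 1 - a 1 * b 0]

/-- The open cylinder of radius `A` about the `x₁`-axis. -/
def cyl (A : ℝ) : Set E3 := {x : E3 | x 1 ^ 2 + x 2 ^ 2 < A ^ 2}

/-- The external magnetic field `B(x) = ((A² - (x₂²+x₃²))^{-θ}, 0, 0)`. -/
def Bf (A θ : ℝ) (x : E3) : E3 := WithLp.toLp 2 ![(A ^ 2 - (x 1 ^ 2 + x 2 ^ 2)) ^ (-θ), 0, 0]

lemma step_ineq {β : ℝ} (hβ0 : 0 < β) (hβ1 : β < 1) {m : ℝ} (hm : 1 ≤ m) :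
    (1 - β) * (m + 1) ^ (-β) ≤ (m + 1) ^ (1 - β) - m ^ (1 - β) := by
  have hm0 : (0:ℝ) < m := by linarith
  have hint : IntervalIntegrable (fun t : ℝ => t ^ (-β)) volume m (m+1) :=
    intervalIntegral.intervalIntegrable_rpow' (by linarith)
  have h1 : ∫ t in m..(m+1), (m+1) ^ (-β) ≤ ∫ t in m..(m+1), t ^ (-β) := by
    apply intervalIntegral.integral_mono_on (by linarith) intervalIntegrable_const hint
    intro t ht
    exact Real.rpow_le_rpow_of_nonpos (lt_of_lt_of_le hm0 ht.1)
      (by linarith [ht.2]) (by linarith)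
  rw [intervalIntegral.integral_const] at h1
  rw [integral_rpow (Or.inl (by linarith))] at h1
  have hβ : (0:ℝ) < 1 - β := by linarith
  have h2 : -β + 1 = 1 - β := by ring
  rw [h2] at h1
  simp only [smul_eq_mul] at h1
  calc (1 - β) * (m + 1) ^ (-β) = (1-β) * ((m + 1 - m) * (m+1)^(-β)) := by ring_nf
    _ ≤ (1-β) * (((m+1)^(1-β) - m^(1-β))/(1-β)) := by
        apply mul_le_mul_of_nonneg_left h1 (le_of_lt hβ)
    _ = (m + 1) ^ (1 - β) - m ^ (1 - β) := by field_simp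

lemma sum_rpow_le {β : ℝ} (hβ0 : 0 < β) (hβ1 : β < 1) (a : ℤ) (ha : 1 ≤ a) :
    ∀ b : ℤ, a ≤ b →
      ∑ i ∈ Finset.Icc a b, ((i:ℝ)) ^ (-β) ≤ ((b:ℝ) - a + 1) ^ (1-β) / (1-β) := by
  have hβ : (0:ℝ) < 1 - β := by linarith
  refine Int.le_induction ?_ ?_
  · simp only [Finset.Icc_self, Finset.sum_singleton]
    have h1 : ((a:ℝ)) ^ (-β) ≤ 1 := by
      calc ((a:ℝ)) ^ (-β) ≤ (1:ℝ) ^ (-β) :=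
            Real.rpow_le_rpow_of_nonpos one_pos (by exact_mod_cast ha) (by linarith)
        _ = 1 := Real.one_rpow _
    have h2 : ((a:ℝ) - a + 1) ^ (1-β) / (1-β) = 1 / (1-β) := by norm_num
    rw [h2]
    calc ((a:ℝ)) ^ (-β) ≤ 1 := h1
      _ ≤ 1 / (1-β) := by rw [le_div_iff₀ hβ]; nlinarith
  · intro b hb ih
    have hins : Finset.Icc a (b+1) = insert (b+1) (Finset.Icc a b) := by
      ext i; simp only [Finset.mem_Icc, Finset.mem_insert]; omega
    have hnot : (b+1) ∉ Finset.Icc a b := by simp only [Finset.mem_Icc]; omega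
    rw [hins, Finset.sum_insert hnot]
    have hm : (1:ℝ) ≤ (b:ℝ) - a + 1 := by
      have : a ≤ b := hb
      have : (a:ℝ) ≤ (b:ℝ) := by exact_mod_cast this
      linarith
    have hstep := step_ineq hβ0 hβ1 hm
    have hb1 : ((b:ℝ)+1) ^ (-β) ≤ ((b:ℝ) - a + 1 + 1) ^ (-β) := by
      apply Real.rpow_le_rpow_of_nonpos (by linarith) ?_ (by linarith)
      have : (1:ℝ) ≤ (a:ℝ) := by exact_mod_cast ha
      linarith
    have key : ((b:ℝ)+1) ^ (-β) ≤
        (((b:ℝ) - a + 1 + 1) ^ (1-β) - ((b:ℝ) - a + 1) ^ (1-β)) / (1-β) := by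
      rw [le_div_iff₀ hβ]
      have h3 := mul_le_mul_of_nonneg_right hb1 hβ.le
      nlinarith [h3, hstep]
    push_cast
    calc ((b:ℝ)+1) ^ (-β) + ∑ i ∈ Finset.Icc a b, ((i:ℝ)) ^ (-β)
        ≤ (((b:ℝ) - a + 1 + 1) ^ (1-β) - ((b:ℝ) - a + 1) ^ (1-β)) / (1-β)
          + ((b:ℝ) - a + 1) ^ (1-β) / (1-β) := add_le_add key ih
      _ = ((b:ℝ) + 1 - a + 1) ^ (1-β) / (1-β) := by rw [← add_div]; ring_nf

lemma pos_part {β : ℝ} (hβ0 : 0 < β) (hβ1 : β < 1) (a b : ℤ) (ha : 1 ≤ a) (W : ℝ)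
    (hW : (b:ℝ) - a + 1 ≤ W) (hW1 : 1 ≤ W) :
    ∑ i ∈ Finset.Icc a b, |(i:ℝ)| ^ (-β) ≤ W ^ (1-β) / (1-β) := by
  have hβ : (0:ℝ) < 1 - β := by linarith
  have hWnn : (0:ℝ) ≤ W := by linarith
  have hR : (0:ℝ) ≤ W ^ (1-β) / (1-β) := by positivity
  rcases le_or_gt a b with hab | hab
  · have habs : ∑ i ∈ Finset.Icc a b, |(i:ℝ)| ^ (-β)
        = ∑ i ∈ Finset.Icc a b, ((i:ℝ)) ^ (-β) := by
      apply Finset.sum_congr rfl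
      intro i hi
      rw [Finset.mem_Icc] at hi
      have : (0:ℝ) ≤ (i:ℝ) := by exact_mod_cast le_trans (by omega : (0:ℤ) ≤ a) hi.1
      rw [abs_of_nonneg this]
    rw [habs]
    calc ∑ i ∈ Finset.Icc a b, ((i:ℝ)) ^ (-β) ≤ ((b:ℝ) - a + 1) ^ (1-β) / (1-β) :=
          sum_rpow_le hβ0 hβ1 a ha b hab
      _ ≤ W ^ (1-β) / (1-β) := by
          have hb : (0:ℝ) ≤ (b:ℝ) - a + 1 := by
            have : (a:ℝ) ≤ (b:ℝ) := by exact_mod_cast hab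
            linarith
          exact div_le_div_of_nonneg_right (Real.rpow_le_rpow hb hW (by linarith)) hβ.le |>.trans_eq rfl
  · rw [Finset.Icc_eq_empty (by omega), Finset.sum_empty]; exact hR

lemma sum_erase_le {β : ℝ} (hβ0 : 0 < β) (hβ1 : β < 1) (L U : ℤ) (W : ℝ)
    (hW : (U:ℝ) - L + 1 ≤ W) (hW1 : 1 ≤ W) :
    ∑ i ∈ (Finset.Icc L U).erase 0, |(i:ℝ)| ^ (-β)
      ≤ 2 * (W ^ (1-β) / (1-β)) := by
  have hβ : (0:ℝ) < 1 - β := by linarith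
  have hsub : (Finset.Icc L U).erase 0 ⊆
      Finset.Icc (max L 1) U ∪ Finset.Icc L (min U (-1)) := by
    intro i hi
    simp only [Finset.mem_erase, Finset.mem_Icc, Finset.mem_union, le_max_iff, max_le_iff,
      le_min_iff, min_le_iff] at hi ⊢
    omega
  have hdisj : Disjoint (Finset.Icc (max L 1) U) (Finset.Icc L (min U (-1))) := by
    rw [Finset.disjoint_left]
    intro i h1 h2
    simp only [Finset.mem_Icc, max_le_iff, le_min_iff] at h1 h2
    omega
  have hnn : ∀ i ∈ Finset.Icc (max L 1) U ∪ Finset.Icc L (min U (-1)),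
      i ∉ (Finset.Icc L U).erase 0 → (0:ℝ) ≤ |(i:ℝ)| ^ (-β) := by
    intro i _ _; positivity
  have hpos : ∑ i ∈ Finset.Icc (max L 1) U, |(i:ℝ)| ^ (-β) ≤ W ^ (1-β) / (1-β) := by
    apply pos_part hβ0 hβ1 _ _ (le_max_right _ _) W ?_ hW1
    have h1 : (L:ℤ) ≤ max L 1 := le_max_left _ _
    have : ((max L 1 : ℤ):ℝ) ≥ (L:ℝ) := by exact_mod_cast h1
    linarith
  have hneg : ∑ i ∈ Finset.Icc L (min U (-1)), |(i:ℝ)| ^ (-β) ≤ W ^ (1-β) / (1-β) := by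
    have hrefl : ∑ i ∈ Finset.Icc L (min U (-1)), |(i:ℝ)| ^ (-β)
        = ∑ j ∈ Finset.Icc (-(min U (-1))) (-L), |(j:ℝ)| ^ (-β) := by
      apply Finset.sum_nbij' (fun i => -i) (fun j => -j)
      · intro a ha; simp only [Finset.mem_Icc] at ha ⊢; omega
      · intro b hb; simp only [Finset.mem_Icc] at hb ⊢; omega
      · intro a _; ring
      · intro b _; ring
      · intro a _; push_cast; rw [abs_neg]
    rw [hrefl]
    have hm1 : (min U (-1) : ℤ) ≤ -1 := min_le_right _ _
    apply pos_part hβ0 hβ1 _ _ (by omega) W ?_ hW1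
    push_cast
    have h4 : ((min U (-1) : ℤ):ℝ) ≤ (U:ℝ) := by exact_mod_cast (min_le_left U (-1))
    push_cast at h4
    linarith
  calc ∑ i ∈ (Finset.Icc L U).erase 0, |(i:ℝ)| ^ (-β)
      ≤ ∑ i ∈ Finset.Icc (max L 1) U ∪ Finset.Icc L (min U (-1)), |(i:ℝ)| ^ (-β) :=
        Finset.sum_le_sum_of_subset_of_nonneg hsub hnn
    _ = _ + _ := Finset.sum_union hdisj
    _ ≤ W ^ (1-β) / (1-β) + W ^ (1-β) / (1-β) := add_le_add hpos hneg
    _ = 2 * (W ^ (1-β) / (1-β)) := by ring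

-- geometry lemmas
lemma coord_le_norm (v : E3) : |v 0| ≤ ‖v‖ := by
  rw [EuclideanSpace.norm_eq, ← Real.sqrt_sq_eq_abs]
  apply Real.sqrt_le_sqrt
  rw [Fin.sum_univ_three]
  simp only [Real.norm_eq_abs, sq_abs]
  nlinarith [sq_nonneg (v 1), sq_nonneg (v 2)]

lemma cyl_slab_subset {A : ℝ} (hA : 0 < A) (i : ℤ) :
    cyl A ∩ {y : E3 | (i:ℝ) ≤ y 0 ∧ y 0 ≤ (i:ℝ) + 1} ⊆
      Metric.closedBall (EuclideanSpace.single (0 : Fin 3) ((i:ℝ))) (1 + A) := by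
  rintro y ⟨hcyl, h0, h1⟩
  rw [Metric.mem_closedBall, EuclideanSpace.dist_eq]
  have e0 : EuclideanSpace.single (0 : Fin 3) ((i:ℝ)) 0 = (i:ℝ) := by
    simp [EuclideanSpace.single_apply]
  have e1 : EuclideanSpace.single (0 : Fin 3) ((i:ℝ)) 1 = 0 := by
    simp [EuclideanSpace.single_apply]
  have e2 : EuclideanSpace.single (0 : Fin 3) ((i:ℝ)) 2 = 0 := by
    simp [EuclideanSpace.single_apply]
  rw [Fin.sum_univ_three, e0, e1, e2]
  simp only [Real.dist_eq, sq_abs]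
  have hc : y 1 ^ 2 + y 2 ^ 2 < A ^ 2 := hcyl
  have : (y 0 - (i:ℝ)) ^ 2 + (y 1 - 0) ^ 2 + (y 2 - 0) ^ 2 ≤ (1 + A) ^ 2 := by nlinarith
  calc Real.sqrt ((y 0 - (i:ℝ)) ^ 2 + (y 1 - 0) ^ 2 + (y 2 - 0) ^ 2)
      ≤ Real.sqrt ((1 + A) ^ 2) := Real.sqrt_le_sqrt this
    _ = 1 + A := by rw [Real.sqrt_sq (by linarith)]

lemma ball_subset_slabs (x : E3) (r : ℝ) :
    Metric.closedBall x r ⊆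
      ⋃ i ∈ Finset.Icc ⌊x 0 - r⌋ ⌊x 0 + r⌋,
        {y : E3 | (i:ℝ) ≤ y 0 ∧ y 0 ≤ (i:ℝ) + 1} := by
  intro y hy
  rw [Metric.mem_closedBall] at hy
  have h1 : |y 0 - x 0| ≤ r := by
    have h2 : |(y - x) 0| ≤ ‖y - x‖ := coord_le_norm _
    have h3 : (y - x) 0 = y 0 - x 0 := rfl
    rw [h3] at h2
    calc |y 0 - x 0| ≤ ‖y - x‖ := h2
      _ = dist y x := (dist_eq_norm _ _).symm
      _ ≤ r := hy
  rw [abs_le] at h1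
  simp only [Set.mem_iUnion, Finset.mem_Icc]
  refine ⟨⌊y 0⌋, ⟨?_, ?_⟩, Int.floor_le _, (Int.lt_floor_add_one _).le⟩
  · exact Int.floor_le_floor (by linarith)
  · exact Int.floor_le_floor (by linarith)

lemma slab_measurable (i : ℤ) :
    MeasurableSet {y : E3 | (i:ℝ) ≤ y 0 ∧ y 0 ≤ (i:ℝ) + 1} := by
  have hm : Measurable fun y : E3 => y 0 :=
    (EuclideanSpace.proj (0 : Fin 3)).continuous.measurable
  exact (measurableSet_le measurable_const hm).inter (measurableSet_le hm measurable_const)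

lemma cyl_measurable (A : ℝ) : MeasurableSet (cyl A) := by
  have h1 : Measurable fun y : E3 => y 1 :=
    (EuclideanSpace.proj (1 : Fin 3)).continuous.measurable
  have h2 : Measurable fun y : E3 => y 2 :=
    (EuclideanSpace.proj (2 : Fin 3)).continuous.measurable
  exact measurableSet_lt (((h1.pow_const 2).add (h2.pow_const 2))) measurable_const

/-- A bounded density supported in the cylinder with decaying unit-slab integrals has a
uniformly bounded Coulomb potential: `sup_x ∫ ρ(y)/|x−y| dy ≤ C`. -/
theorem potential_bound
    (A M C₁ α : ℝ) (hA : 0 < A) (hM : 0 < M) (hC₁ : 0 < C₁) (hα0 : 0 < α) (hα1 : α ≤ 1) :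
    ∃ C : ℝ, 0 < C ∧
      ∀ ρ : E3 → ℝ, Measurable ρ → (∀ x, 0 ≤ ρ x) → (∀ x, ρ x ≤ M) →
        (∀ x, x ∉ cyl A → ρ x = 0) →
        (∀ i : ℤ, i ≠ 0 →
          (∫ x in {x : E3 | (i:ℝ) ≤ x 0 ∧ x 0 ≤ (i:ℝ) + 1}, ρ x) ≤ C₁ / |(i:ℝ)| ^ α) →
        ∀ x : E3, (∫ y : E3, ρ y / ‖x - y‖) ≤ C := by
  set β : ℝ := α / 2 with hβdef
  have hβ0 : 0 < β := by positivity
  have hβ1 : β < 1 := by simp only [hβdef]; linarith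
  have hβα : β ≤ α := by simp only [hβdef]; linarith
  set B : ℝ≥0∞ := volume (Metric.ball (0:E3) 1) with hBdef
  have hBfin : B ≠ ⊤ := measure_ball_lt_top.ne
  set Vc : ℝ≥0∞ := ENNReal.ofReal M * ENNReal.ofReal ((1+A)^3) * B with hVcdef
  have hVcfin : Vc ≠ ⊤ := ENNReal.mul_ne_top (ENNReal.mul_ne_top ENNReal.ofReal_ne_top
    ENNReal.ofReal_ne_top) hBfin
  set Knear : ℝ := C₁ * (2 * (4 ^ (1-β) / (1-β))) with hKdef
  set J₂ : ℝ := ∫ t in Ioc (0:ℝ) 1, t ^ (β-1) with hJ₂def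
  set J₃ : ℝ := ∫ t in Ioi (1:ℝ), t ^ (-(3:ℝ)) with hJ₃def
  set Ltop : ℝ≥0∞ := Vc + ENNReal.ofReal Knear * ENNReal.ofReal J₂
      + ENNReal.ofReal M * B * ENNReal.ofReal J₃ with hLdef
  have hLfin : Ltop ≠ ⊤ := by
    apply ENNReal.add_ne_top.mpr
    constructor
    · exact ENNReal.add_ne_top.mpr ⟨hVcfin,
        ENNReal.mul_ne_top ENNReal.ofReal_ne_top ENNReal.ofReal_ne_top⟩
    · exact ENNReal.mul_ne_top (ENNReal.mul_ne_top ENNReal.ofReal_ne_top hBfin)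
        ENNReal.ofReal_ne_top
  refine ⟨Ltop.toReal + 1, by positivity, ?_⟩
  intro ρ hρm hρ0 hρM hρsupp hρslab x
  -- the density measure
  set ν : Measure E3 := volume.withDensity (fun y => ENNReal.ofReal (ρ y)) with hνdef
  have hρmE : Measurable fun y => ENNReal.ofReal (ρ y) := hρm.ennreal_ofReal
  -- slab bound from decay hypothesis
  have hslab_int : ∀ i : ℤ, IntegrableOn ρ {y : E3 | (i:ℝ) ≤ y 0 ∧ y 0 ≤ (i:ℝ) + 1} := by
    intro i
    set S := {y : E3 | (i:ℝ) ≤ y 0 ∧ y 0 ≤ (i:ℝ) + 1}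
    have hS : MeasurableSet S := slab_measurable i
    have h1 : IntegrableOn ρ (S ∩ cyl A) := by
      have hfin : volume (S ∩ cyl A) ≠ ⊤ := by
        apply ne_of_lt
        calc volume (S ∩ cyl A)
            ≤ volume (Metric.closedBall (EuclideanSpace.single (0 : Fin 3) ((i:ℝ))) (1 + A)) :=
              measure_mono (by rw [Set.inter_comm]; exact cyl_slab_subset hA i)
          _ < ⊤ := measure_closedBall_lt_top
      have hbdd : ∀ᵐ y ∂(volume.restrict (S ∩ cyl A)), ‖ρ y‖ ≤ M := by
        filter_upwards with y
        rw [Real.norm_eq_abs, abs_of_nonneg (hρ0 y)]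
        exact hρM y
      exact Measure.integrableOn_of_bounded hfin hρm.aestronglyMeasurable hbdd
    have h2 : IntegrableOn ρ (S \ cyl A) := by
      apply (integrableOn_congr_fun (g := fun _ => (0:ℝ)) ?_ (hS.diff (cyl_measurable A))).mpr
        (integrableOn_zero)
      intro y hy
      exact hρsupp y hy.2
    have := h1.union h2
    rwa [Set.inter_union_diff] at this
  have hν_slab_dec : ∀ i : ℤ, i ≠ 0 →
      ν {y : E3 | (i:ℝ) ≤ y 0 ∧ y 0 ≤ (i:ℝ) + 1} ≤ ENNReal.ofReal (C₁ / |(i:ℝ)| ^ α) := by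
    intro i hi
    rw [hνdef, withDensity_apply _ (slab_measurable i)]
    rw [← ofReal_integral_eq_lintegral_ofReal (hslab_int i)
      (Filter.Eventually.of_forall fun y => hρ0 y)]
    exact ENNReal.ofReal_le_ofReal (hρslab i hi)
  -- uniform slab bound
  have hν_slab_M : ∀ i : ℤ,
      ν {y : E3 | (i:ℝ) ≤ y 0 ∧ y 0 ≤ (i:ℝ) + 1} ≤ Vc := by
    intro i
    rw [hνdef, withDensity_apply _ (slab_measurable i)]
    have hpt : ∀ y : E3, ENNReal.ofReal (ρ y)
        ≤ (cyl A).indicator (fun _ => ENNReal.ofReal M) y := by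
      intro y
      by_cases hy : y ∈ cyl A
      · rw [Set.indicator_of_mem hy]
        exact ENNReal.ofReal_le_ofReal (hρM y)
      · rw [Set.indicator_of_notMem hy, hρsupp y hy]
        simp
    calc ∫⁻ y in {y : E3 | (i:ℝ) ≤ y 0 ∧ y 0 ≤ (i:ℝ) + 1}, ENNReal.ofReal (ρ y)
        ≤ ∫⁻ y in {y : E3 | (i:ℝ) ≤ y 0 ∧ y 0 ≤ (i:ℝ) + 1},
            (cyl A).indicator (fun _ => ENNReal.ofReal M) y :=
          setLIntegral_mono ((measurable_const.indicator (cyl_measurable A))) fun y _ => hpt y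
      _ = ∫⁻ y in cyl A ∩ {y : E3 | (i:ℝ) ≤ y 0 ∧ y 0 ≤ (i:ℝ) + 1}, ENNReal.ofReal M := by
          rw [lintegral_indicator (cyl_measurable A), Measure.restrict_restrict (cyl_measurable A)]
      _ = ENNReal.ofReal M * volume (cyl A ∩ {y : E3 | (i:ℝ) ≤ y 0 ∧ y 0 ≤ (i:ℝ) + 1}) := by
          rw [setLIntegral_const]
      _ ≤ ENNReal.ofReal M * volume
            (Metric.closedBall (EuclideanSpace.single (0 : Fin 3) ((i:ℝ))) (1 + A)) := by
          exact mul_le_mul_right (measure_mono (cyl_slab_subset hA i)) _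
      _ = Vc := by
          rw [Measure.addHaar_closedBall volume _ (by linarith : (0:ℝ) ≤ 1 + A)]
          rw [show Module.finrank ℝ E3 = 3 from finrank_euclideanSpace_fin]
          rw [hVcdef, hBdef, mul_assoc]
  -- ball bound via density bound M
  have hν_ball_M : ∀ r : ℝ, 0 ≤ r →
      ν (Metric.closedBall x r) ≤ ENNReal.ofReal M * ENNReal.ofReal (r ^ 3) * B := by
    intro r hr
    rw [hνdef, withDensity_apply _ measurableSet_closedBall]
    calc ∫⁻ y in Metric.closedBall x r, ENNReal.ofReal (ρ y)
        ≤ ∫⁻ _ in Metric.closedBall x r, ENNReal.ofReal M :=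
          setLIntegral_mono measurable_const fun y _ => ENNReal.ofReal_le_ofReal (hρM y)
      _ = ENNReal.ofReal M * volume (Metric.closedBall x r) := by rw [setLIntegral_const]
      _ = ENNReal.ofReal M * ENNReal.ofReal (r ^ 3) * B := by
          rw [Measure.addHaar_closedBall volume _ hr,
            show Module.finrank ℝ E3 = 3 from finrank_euclideanSpace_fin, hBdef, mul_assoc]
  -- ball bound via slabs, for r ≥ 1
  have hν_ball_slab : ∀ r : ℝ, 1 ≤ r →
      ν (Metric.closedBall x r) ≤ Vc + ENNReal.ofReal (C₁ * (2 * ((4*r) ^ (1-β) / (1-β)))) := by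
    intro r hr
    set L : ℤ := ⌊x 0 - r⌋ with hLdef'
    set U : ℤ := ⌊x 0 + r⌋ with hUdef'
    have hsum_dec : ∑ i ∈ (Finset.Icc L U).erase 0,
        ν {y : E3 | (i:ℝ) ≤ y 0 ∧ y 0 ≤ (i:ℝ) + 1}
          ≤ ENNReal.ofReal (C₁ * (2 * ((4*r) ^ (1-β) / (1-β)))) := by
      calc ∑ i ∈ (Finset.Icc L U).erase 0, ν {y : E3 | (i:ℝ) ≤ y 0 ∧ y 0 ≤ (i:ℝ) + 1}
          ≤ ∑ i ∈ (Finset.Icc L U).erase 0, ENNReal.ofReal (C₁ / |(i:ℝ)| ^ α) :=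
            Finset.sum_le_sum fun i hi => hν_slab_dec i (Finset.ne_of_mem_erase hi)
        _ = ENNReal.ofReal (∑ i ∈ (Finset.Icc L U).erase 0, C₁ / |(i:ℝ)| ^ α) := by
            rw [ENNReal.ofReal_sum_of_nonneg]
            intro i _
            positivity
        _ ≤ ENNReal.ofReal (C₁ * (2 * ((4*r) ^ (1-β) / (1-β)))) := by
            apply ENNReal.ofReal_le_ofReal
            have hterm : ∀ i ∈ (Finset.Icc L U).erase 0,
                C₁ / |(i:ℝ)| ^ α ≤ C₁ * |(i:ℝ)| ^ (-β) := by
              intro i hi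
              have hi0 : i ≠ 0 := Finset.ne_of_mem_erase hi
              have habs : (1:ℝ) ≤ |(i:ℝ)| := by
                rw [← Int.cast_abs]
                exact_mod_cast Int.one_le_abs hi0
              rw [div_eq_mul_inv, ← Real.rpow_neg (by positivity)]
              apply mul_le_mul_of_nonneg_left ?_ hC₁.le
              exact Real.rpow_le_rpow_of_exponent_le habs (by linarith)
            calc ∑ i ∈ (Finset.Icc L U).erase 0, C₁ / |(i:ℝ)| ^ α
                ≤ ∑ i ∈ (Finset.Icc L U).erase 0, C₁ * |(i:ℝ)| ^ (-β) :=
                  Finset.sum_le_sum hterm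
              _ = C₁ * ∑ i ∈ (Finset.Icc L U).erase 0, |(i:ℝ)| ^ (-β) := by
                  rw [Finset.mul_sum]
              _ ≤ C₁ * (2 * ((4*r) ^ (1-β) / (1-β))) := by
                  apply mul_le_mul_of_nonneg_left ?_ hC₁.le
                  apply sum_erase_le hβ0 hβ1 L U (4*r) ?_ (by linarith)
                  have h1 : (U:ℝ) ≤ x 0 + r := Int.floor_le _
                  have h2 : x 0 - r - 1 < (L:ℝ) := Int.sub_one_lt_floor _
                  linarith
    have hcover : ν (Metric.closedBall x r)
        ≤ ∑ i ∈ Finset.Icc L U, ν {y : E3 | (i:ℝ) ≤ y 0 ∧ y 0 ≤ (i:ℝ) + 1} := by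
      calc ν (Metric.closedBall x r)
          ≤ ν (⋃ i ∈ Finset.Icc L U, {y : E3 | (i:ℝ) ≤ y 0 ∧ y 0 ≤ (i:ℝ) + 1}) :=
            measure_mono (ball_subset_slabs x r)
        _ ≤ _ := measure_biUnion_finset_le _ _
    refine hcover.trans ?_
    by_cases h0 : (0:ℤ) ∈ Finset.Icc L U
    · rw [← Finset.add_sum_erase _ _ h0]
      have h00 : ν {y : E3 | ((0:ℤ):ℝ) ≤ y 0 ∧ y 0 ≤ ((0:ℤ):ℝ) + 1} ≤ Vc := hν_slab_M 0
      exact add_le_add h00 hsum_dec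
    · rw [← Finset.erase_eq_of_notMem h0]
      calc ∑ i ∈ (Finset.Icc L U).erase 0, ν {y : E3 | (i:ℝ) ≤ y 0 ∧ y 0 ≤ (i:ℝ) + 1}
          ≤ ENNReal.ofReal (C₁ * (2 * ((4*r) ^ (1-β) / (1-β)))) := hsum_dec
        _ ≤ Vc + _ := le_add_self
  -- final assembly
  have hKnn : 0 ≤ Knear := by
    rw [hKdef]
    have : (0:ℝ) < 1 - β := by linarith
    positivity
  have hfm : Measurable fun y : E3 => ‖x - y‖⁻¹ :=
    ((continuous_const.sub continuous_id).norm.measurable).inv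
  have hfmE : Measurable fun y : E3 => ENNReal.ofReal (‖x - y‖⁻¹) := hfm.ennreal_ofReal
  have hsub_gen : ∀ t : ℝ, 0 < t →
      {y : E3 | t < ‖x - y‖⁻¹} ⊆ Metric.closedBall x (1/t) := by
    intro t ht y hy
    simp only [Set.mem_setOf_eq] at hy
    have hpos : 0 < ‖x - y‖ := by
      by_contra h
      have h0 : ‖x - y‖ = 0 := le_antisymm (not_lt.mp h) (norm_nonneg _)
      rw [h0] at hy
      simp at hy
      linarith
    have h1 : ‖x - y‖ < t⁻¹ := (lt_inv_comm₀ ht hpos).mp hy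
    rw [Metric.mem_closedBall, dist_eq_norm, ← norm_sub_rev, one_div]
    exact h1.le
  have key : ∫⁻ y, ENNReal.ofReal (ρ y / ‖x - y‖) ≤ Ltop := by
    have hstep1 : (fun y : E3 => ENNReal.ofReal (ρ y / ‖x - y‖))
        = fun y => ENNReal.ofReal (ρ y) * ENNReal.ofReal (‖x - y‖⁻¹) := by
      funext y; rw [div_eq_mul_inv, ENNReal.ofReal_mul (hρ0 y)]
    have hwd := lintegral_withDensity_eq_lintegral_mul volume hρmE hfmE
    simp only [Pi.mul_apply] at hwd
    have hlayer := lintegral_eq_lintegral_meas_lt ν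
      (Filter.Eventually.of_forall fun y : E3 => inv_nonneg.mpr (norm_nonneg (x - y)))
      (hfm.aemeasurable)
    rw [hstep1, ← hwd, hlayer]
    have hsplit : (Ioi (0:ℝ)) = Ioc (0:ℝ) 1 ∪ Ioi (1:ℝ) := (Ioc_union_Ioi_eq_Ioi zero_le_one).symm
    rw [hsplit, lintegral_union measurableSet_Ioi (Ioc_disjoint_Ioi le_rfl)]
    have hmono_near : ∫⁻ t in Ioc (0:ℝ) 1, ν {y : E3 | t < ‖x - y‖⁻¹}
        ≤ ∫⁻ t in Ioc (0:ℝ) 1, (Vc + ENNReal.ofReal Knear * ENNReal.ofReal (t ^ (β-1))) := by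
      apply setLIntegral_mono
      · exact measurable_const.add (measurable_const.mul
          ((measurable_id.pow measurable_const).ennreal_ofReal))
      intro t ht
      have ht0 : 0 < t := ht.1
      have hr1 : 1 ≤ 1/t := by
        rw [le_div_iff₀ ht0]; linarith [ht.2]
      calc ν {y : E3 | t < ‖x - y‖⁻¹} ≤ ν (Metric.closedBall x (1/t)) :=
            measure_mono (hsub_gen t ht0)
        _ ≤ Vc + ENNReal.ofReal (C₁ * (2 * ((4*(1/t)) ^ (1-β) / (1-β)))) :=
            hν_ball_slab (1/t) hr1
        _ = Vc + ENNReal.ofReal Knear * ENNReal.ofReal (t ^ (β-1)) := by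
            congr 1
            have hrw : (4*(1/t)) ^ (1-β) = 4 ^ (1-β) * t ^ (β-1) := by
              rw [show (4*(1/t):ℝ) = 4 * t⁻¹ by ring,
                Real.mul_rpow (by norm_num) (inv_nonneg.mpr ht0.le),
                Real.inv_rpow ht0.le, ← Real.rpow_neg ht0.le]
              congr 1
              ring
            rw [hrw, ← ENNReal.ofReal_mul hKnn]
            congr 1
            rw [hKdef]
            ring
    have hmono_far : ∫⁻ t in Ioi (1:ℝ), ν {y : E3 | t < ‖x - y‖⁻¹}
        ≤ ∫⁻ t in Ioi (1:ℝ), (ENNReal.ofReal M * B) * ENNReal.ofReal (t ^ (-(3:ℝ))) := by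
      apply setLIntegral_mono
      · exact measurable_const.mul ((measurable_id.pow measurable_const).ennreal_ofReal)
      intro t ht
      have ht0 : (0:ℝ) < t := lt_trans one_pos ht
      calc ν {y : E3 | t < ‖x - y‖⁻¹} ≤ ν (Metric.closedBall x (1/t)) :=
            measure_mono (hsub_gen t ht0)
        _ ≤ ENNReal.ofReal M * ENNReal.ofReal ((1/t) ^ 3) * B := hν_ball_M (1/t) (by positivity)
        _ = (ENNReal.ofReal M * B) * ENNReal.ofReal (t ^ (-(3:ℝ))) := by
            have hrw : ((1/t:ℝ)) ^ 3 = t ^ (-(3:ℝ)) := by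
              rw [Real.rpow_neg ht0.le, show ((3:ℝ) = ((3:ℕ):ℝ)) by norm_num,
                Real.rpow_natCast, one_div, inv_pow]
            rw [hrw]
            ring
    have hnear_val : ∫⁻ t in Ioc (0:ℝ) 1,
        (Vc + ENNReal.ofReal Knear * ENNReal.ofReal (t ^ (β-1)))
          = Vc + ENNReal.ofReal Knear * ENNReal.ofReal J₂ := by
      rw [lintegral_add_left measurable_const]
      rw [setLIntegral_const]
      rw [Real.volume_Ioc, show ((1:ℝ) - 0) = 1 by norm_num, ENNReal.ofReal_one, mul_one]
      congr 1
      have hrpm : Measurable fun t : ℝ => ENNReal.ofReal (t ^ (β-1)) :=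
        (measurable_id.pow measurable_const).ennreal_ofReal
      rw [lintegral_const_mul _ hrpm]
      congr 1
      have hInt : IntegrableOn (fun t : ℝ => t ^ (β-1)) (Ioc 0 1) :=
        (intervalIntegral.intervalIntegrable_rpow' (by linarith : (-1:ℝ) < β-1)).1
      have hnn : 0 ≤ᵐ[volume.restrict (Ioc (0:ℝ) 1)] fun t : ℝ => t ^ (β-1) := by
        rw [Filter.EventuallyLE, ae_restrict_iff' measurableSet_Ioc]
        filter_upwards with t ht
        exact Real.rpow_nonneg ht.1.le _
      rw [hJ₂def, ofReal_integral_eq_lintegral_ofReal hInt hnn]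
    have hfar_val : ∫⁻ t in Ioi (1:ℝ), (ENNReal.ofReal M * B) * ENNReal.ofReal (t ^ (-(3:ℝ)))
        = ENNReal.ofReal M * B * ENNReal.ofReal J₃ := by
      have hrpm : Measurable fun t : ℝ => ENNReal.ofReal (t ^ (-(3:ℝ))) :=
        (measurable_id.pow measurable_const).ennreal_ofReal
      rw [lintegral_const_mul _ hrpm]
      congr 1
      have hInt : IntegrableOn (fun t : ℝ => t ^ (-(3:ℝ))) (Ioi 1) :=
        integrableOn_Ioi_rpow_of_lt (by norm_num) one_pos
      have hnn : 0 ≤ᵐ[volume.restrict (Ioi (1:ℝ))] fun t : ℝ => t ^ (-(3:ℝ)) := by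
        rw [Filter.EventuallyLE, ae_restrict_iff' measurableSet_Ioi]
        filter_upwards with t ht
        exact Real.rpow_nonneg (by linarith [mem_Ioi.mp ht] : (0:ℝ) ≤ t) _
      rw [hJ₃def, ofReal_integral_eq_lintegral_ofReal hInt hnn]
    calc (∫⁻ t in Ioc (0:ℝ) 1, ν {y : E3 | t < ‖x - y‖⁻¹})
          + ∫⁻ t in Ioi (1:ℝ), ν {y : E3 | t < ‖x - y‖⁻¹}
        ≤ (Vc + ENNReal.ofReal Knear * ENNReal.ofReal J₂)
          + ENNReal.ofReal M * B * ENNReal.ofReal J₃ := by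
          apply add_le_add (hmono_near.trans hnear_val.le) (hmono_far.trans hfar_val.le)
      _ = Ltop := by rw [hLdef]
  -- conclude
  have hint_eq := integral_eq_lintegral_of_nonneg_ae
    (Filter.Eventually.of_forall fun y : E3 => div_nonneg (hρ0 y) (norm_nonneg (x - y)))
    ((hρm.div (continuous_const.sub continuous_id).norm.measurable).aestronglyMeasurable
      : AEStronglyMeasurable (fun y : E3 => ρ y / ‖x - y‖) volume)
  rw [hint_eq]
  have h1 : (∫⁻ y, ENNReal.ofReal (ρ y / ‖x - y‖)).toReal ≤ Ltop.toReal :=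
    ENNReal.toReal_mono hLfin key
  linarith
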